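/- Statistical information bound. Let X and Y be finite nonempty sets and m ≥ 1. For each i ∈ X let σ_i be a density matrix on Fin m (the channel output on the i-th input state), let ρ₀ be a density matrix on Fin m, and let p ≥ 0 be a real number such that ρ₀ − p·σ_i is positive semidefinite for every i ∈ X. Let (P_j)_{j ∈ Y} be positive semidefinite matrices on Fin m with ∑_{j ∈ Y} P_j = I_m, let π : X → ℝ with π_i ≥ 0 and ∑_{i ∈ X} π_i = 1, and let f : X × Y → ℝ with f(i,j) ≥ 0. Then p · ∑_{i ∈ X} π_i ∑_{j ∈ Y} f(i,j) · Re(Tr[σ_i P_j]) ≤ max_{j ∈ Y} ∑_{i ∈ X} π_i · f(i,j). (The probability of simulating a channel from the future to the past is at most the inverse of the expected payoff achievable by communicating through the channel.) -/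

import Mathlib

open Matrix
open scoped Kronecker ComplexOrder

lemma psd_trace_re_nonneg {n : ℕ} {M : Matrix (Fin n) (Fin n) ℂ} (hM : M.PosSemidef) :
    0 ≤ (M.trace).re := by
  have h : ∀ i, 0 ≤ (M i i).re := fun i => by
    simpa [dotProduct, mulVec, Pi.single_apply] using hM.re_dotProduct_nonneg (Pi.single i 1)
  rw [Matrix.trace]
  simp only [Matrix.diag, Complex.re_sum]
  exact Finset.sum_nonneg fun i _ => h i

lemma trace_mul_re_nonneg {n : ℕ} {A B : Matrix (Fin n) (Fin n) ℂ}
    (hA : A.PosSemidef) (hB : B.PosSemidef) : 0 ≤ ((A * B).trace).re := by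
  obtain ⟨C, rfl⟩ : ∃ C : Matrix (Fin n) (Fin n) ℂ, B = Cᴴ * C := by
    open scoped MatrixOrder in exact CStarAlgebra.nonneg_iff_eq_star_mul_self.mp hB.nonneg
  rw [← mul_assoc, Matrix.trace_mul_cycle]
  exact psd_trace_re_nonneg (hA.mul_mul_conjTranspose_same C)

/-- Statistical information bound: the probability of simulating a channel from the
future to the past is at most the inverse of the expected payoff achievable by
communicating through the channel. -/
theorem statistical_information_bound (X Y : Type) [Fintype X] [Fintype Y]
    [Nonempty X] [Nonempty Y] (m : ℕ) (hm : 1 ≤ m)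
    (σ : X → Matrix (Fin m) (Fin m) ℂ)
    (hσ : ∀ i, (σ i).PosSemidef) (hσtr : ∀ i, (σ i).trace = 1)
    (ρ₀ : Matrix (Fin m) (Fin m) ℂ) (hρ₀ : ρ₀.PosSemidef) (hρ₀tr : ρ₀.trace = 1)
    (p : ℝ) (hp : 0 ≤ p)
    (hcaus : ∀ i, (ρ₀ - (p : ℂ) • σ i).PosSemidef)
    (P : Y → Matrix (Fin m) (Fin m) ℂ)
    (hP : ∀ j, (P j).PosSemidef) (hPsum : ∑ j, P j = 1)
    (π : X → ℝ) (hπ : ∀ i, 0 ≤ π i) (hπsum : ∑ i, π i = 1)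
    (f : X → Y → ℝ) (hf : ∀ i j, 0 ≤ f i j) :
    p * ∑ i, π i * ∑ j, f i j * ((σ i * P j).trace).re ≤
      ⨆ j, ∑ i, π i * f i j := by
  set M := ⨆ j, ∑ i, π i * f i j with hM
  have hbdd : BddAbove (Set.range fun j => ∑ i, π i * f i j) :=
    (Set.finite_range _).bddAbove
  have hMle : ∀ j, ∑ i, π i * f i j ≤ M := fun j => le_ciSup hbdd j
  have ht : ∀ j, 0 ≤ ((ρ₀ * P j).trace).re := fun j => trace_mul_re_nonneg hρ₀ (hP j)
  have key : ∀ i j, p * ((σ i * P j).trace).re ≤ ((ρ₀ * P j).trace).re := by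
    intro i j
    have h := trace_mul_re_nonneg (hcaus i) (hP j)
    rw [Matrix.sub_mul, Matrix.smul_mul, trace_sub, trace_smul] at h
    rw [smul_eq_mul] at h
    simp only [Complex.sub_re, Complex.mul_re, Complex.ofReal_re, Complex.ofReal_im,
      zero_mul, sub_zero] at h
    linarith
  have hsum : ∑ j, ((ρ₀ * P j).trace).re = 1 := by
    rw [← Complex.re_sum, ← trace_sum, ← Matrix.mul_sum, hPsum, mul_one, hρ₀tr]
    simp
  calc p * ∑ i, π i * ∑ j, f i j * ((σ i * P j).trace).re
      = ∑ i, ∑ j, π i * (f i j * (p * ((σ i * P j).trace).re)) := by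
        rw [Finset.mul_sum]
        refine Finset.sum_congr rfl fun i _ => ?_
        rw [Finset.mul_sum, Finset.mul_sum]
        exact Finset.sum_congr rfl fun j _ => by ring
    _ ≤ ∑ i, ∑ j, π i * (f i j * ((ρ₀ * P j).trace).re) :=
        Finset.sum_le_sum fun i _ => Finset.sum_le_sum fun j _ =>
          mul_le_mul_of_nonneg_left
            (mul_le_mul_of_nonneg_left (key i j) (hf i j)) (hπ i)
    _ = ∑ j, (∑ i, π i * f i j) * ((ρ₀ * P j).trace).re := by
        rw [Finset.sum_comm]
        refine Finset.sum_congr rfl fun j _ => ?_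
        rw [Finset.sum_mul]
        exact Finset.sum_congr rfl fun i _ => by ring
    _ ≤ ∑ j, M * ((ρ₀ * P j).trace).re :=
        Finset.sum_le_sum fun j _ => mul_le_mul_of_nonneg_right (hMle j) (ht j)
    _ = M := by rw [← Finset.mul_sum, hsum, mul_one]
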